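/- Let E be a 2-dimensional inner product space and let T : E → E be an invertible linear map. Then the induced map on the projective space P(E) (equipped with the angle metric d([v],[w]) = angle between the lines spanned by v and w) is Lipschitz with Lipschitz constant at most ‖T‖·‖T⁻¹‖. -/

import Mathlib

open InnerProductGeometry Real RealInnerProductSpace Filter Topology

section Aux

variable {E : Type*} [NormedAddCommGroup E] [InnerProductSpace ℝ E]

private lemma expand_inner (x y : E) (c : ℝ) :
    ⟪y - c • x, y - c • x⟫ = ⟪y,y⟫ - 2*c*⟪x,y⟫ + c^2*⟪x,x⟫ := by
  simp only [inner_sub_left, inner_sub_right, real_inner_smul_left, real_inner_smul_right,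
    real_inner_comm x y]
  ring

private lemma sin_angle_le' (x y : E) (c : ℝ) :
    Real.sin (angle x y) * (‖x‖ * ‖y‖) ≤ ‖x‖ * ‖y - c • x‖ := by
  rw [InnerProductGeometry.sin_angle_mul_norm_mul_norm]
  have h0 : (0:ℝ) ≤ ‖x‖ * ‖y - c • x‖ := by positivity
  rw [show ‖x‖ * ‖y - c • x‖ = √((‖x‖ * ‖y - c • x‖)^2) from (Real.sqrt_sq h0).symm]
  apply Real.sqrt_le_sqrt
  have e1 : ⟪x,x⟫ = ‖x‖^2 := real_inner_self_eq_norm_sq x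
  have e2 : ⟪y - c • x, y - c • x⟫ = ‖y - c • x‖^2 := real_inner_self_eq_norm_sq _
  have e3 := expand_inner x y c
  have e4 : (‖x‖ * ‖y - c • x‖)^2 = ⟪x,x⟫ * (⟪y,y⟫ - 2*c*⟪x,y⟫ + c^2*⟪x,x⟫) := by
    rw [mul_pow, ← e1, ← e2, e3]
  rw [e4]
  nlinarith [sq_nonneg (⟪x,y⟫ - c * ⟪x,x⟫)]

private lemma sin_angle_eq (x y : E) (hx : x ≠ 0) :
    ‖x‖ * ‖y - (⟪x,y⟫/‖x‖^2) • x‖ = Real.sin (angle x y) * (‖x‖ * ‖y‖) := by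
  rw [InnerProductGeometry.sin_angle_mul_norm_mul_norm]
  set c : ℝ := ⟪x,y⟫/‖x‖^2 with hc
  have h0 : (0:ℝ) ≤ ‖x‖ * ‖y - c • x‖ := by positivity
  rw [show ‖x‖ * ‖y - c • x‖ = √((‖x‖ * ‖y - c • x‖)^2) from (Real.sqrt_sq h0).symm]
  congr 1
  have e1 : ⟪x,x⟫ = ‖x‖^2 := real_inner_self_eq_norm_sq x
  have e2 : ⟪y - c • x, y - c • x⟫ = ‖y - c • x‖^2 := real_inner_self_eq_norm_sq _
  have e3 := expand_inner x y c
  have e4 : (‖x‖ * ‖y - c • x‖)^2 = ⟪x,x⟫ * (⟪y,y⟫ - 2*c*⟪x,y⟫ + c^2*⟪x,x⟫) := by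
    rw [mul_pow, ← e1, ← e2, e3]
  rw [e4, hc, ← e1]
  have hxx : ‖x‖^2 ≠ 0 := pow_ne_zero _ (norm_ne_zero_iff.mpr hx)
  rw [e1]
  field_simp
  ring

private lemma arccos_le_arccos' {s t : ℝ} (h : s ≤ t) : Real.arccos t ≤ Real.arccos s := by
  rw [Real.arccos_eq_pi_div_two_sub_arcsin, Real.arccos_eq_pi_div_two_sub_arcsin]
  have := Real.monotone_arcsin h; linarith

private lemma angle_triangle_unit (a b c : E) (ha : ‖a‖ = 1) (hb : ‖b‖ = 1) (hc : ‖c‖ = 1) :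
    angle a c ≤ angle a b + angle b c := by
  set α := angle a b with hα
  set β := angle b c with hβ
  have hα0 : 0 ≤ α := angle_nonneg a b
  have hβ0 : 0 ≤ β := angle_nonneg b c
  by_cases hπ : π ≤ α + β
  · exact le_trans (angle_le_pi a c) hπ
  push_neg at hπ
  have hbne : b ≠ 0 := by intro h; rw [h] at hb; simp at hb
  set u : E := a - ⟪b,a⟫ • b with hu
  set v : E := c - ⟪b,c⟫ • b with hv
  have hun : ‖u‖ = Real.sin α := by
    have h1 := sin_angle_eq b a hbne
    rw [hb] at h1; simp only [one_pow, div_one, one_mul, mul_one, ha] at h1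
    rw [hu, h1, angle_comm]
  have hvn : ‖v‖ = Real.sin β := by
    have h1 := sin_angle_eq b c hbne
    rw [hb] at h1; simp only [one_pow, div_one, one_mul, mul_one, hc] at h1
    rw [hv, h1]
  have hbb : ⟪b,b⟫ = (1:ℝ) := by
    rw [real_inner_self_eq_norm_sq, hb]; norm_num
  have hdecomp : ⟪a,c⟫ = ⟪b,a⟫ * ⟪b,c⟫ + ⟪u,v⟫ := by
    simp only [hu, hv, inner_sub_left, inner_sub_right, real_inner_smul_left,
      real_inner_smul_right, hbb, real_inner_comm b a]
    ring
  have hca : Real.cos α = ⟪a,b⟫ := by rw [hα, cos_angle, ha, hb]; norm_num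
  have hcb : Real.cos β = ⟪b,c⟫ := by rw [hβ, cos_angle, hb, hc]; norm_num
  have habs : -(‖u‖ * ‖v‖) ≤ ⟪u,v⟫ := neg_le_of_abs_le (abs_real_inner_le_norm u v)
  have h5 : Real.cos (α + β) ≤ ⟪a,c⟫ := by
    rw [Real.cos_add, hca, hcb, hdecomp, real_inner_comm a b]
    have : Real.sin α * Real.sin β = ‖u‖ * ‖v‖ := by rw [hun, hvn]
    linarith
  have h6 : Real.cos (angle a c) = ⟪a,c⟫ := by rw [cos_angle, ha, hc]; norm_num
  calc angle a c = Real.arccos (Real.cos (angle a c)) :=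
        (Real.arccos_cos (angle_nonneg a c) (angle_le_pi a c)).symm
    _ ≤ Real.arccos (Real.cos (α + β)) := by rw [h6]; exact arccos_le_arccos' h5
    _ = α + β := Real.arccos_cos (by linarith) (le_of_lt hπ)

private lemma angle_triangle (a b c : E) (ha : a ≠ 0) (hb : b ≠ 0) (hc : c ≠ 0) :
    angle a c ≤ angle a b + angle b c := by
  have pa : (0:ℝ) < ‖a‖⁻¹ := inv_pos.mpr (norm_pos_iff.mpr ha)
  have pb : (0:ℝ) < ‖b‖⁻¹ := inv_pos.mpr (norm_pos_iff.mpr hb)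
  have pc : (0:ℝ) < ‖c‖⁻¹ := inv_pos.mpr (norm_pos_iff.mpr hc)
  have h := angle_triangle_unit (‖a‖⁻¹ • a) (‖b‖⁻¹ • b) (‖c‖⁻¹ • c)
    (norm_smul_inv_norm ha) (norm_smul_inv_norm hb) (norm_smul_inv_norm hc)
  rwa [angle_smul_left_of_pos _ _ pa, angle_smul_right_of_pos _ _ pc,
    angle_smul_left_of_pos _ _ pa, angle_smul_right_of_pos _ _ pb,
    angle_smul_left_of_pos _ _ pb, angle_smul_right_of_pos _ _ pc] at h

private lemma pd_triangle (a b c : E) (ha : a ≠ 0) (hb : b ≠ 0) (hc : c ≠ 0) :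
    min (angle a c) (angle a (-c)) ≤
      min (angle a b) (angle a (-b)) + min (angle b c) (angle b (-c)) := by
  have hnb : (-b : E) ≠ 0 := neg_ne_zero.mpr hb
  have hnc : (-c : E) ≠ 0 := neg_ne_zero.mpr hc
  rcases le_total (angle a b) (angle a (-b)) with h1 | h1 <;>
    rcases le_total (angle b c) (angle b (-c)) with h2 | h2
  · rw [min_eq_left h1, min_eq_left h2]
    exact le_trans (min_le_left _ _) (angle_triangle a b c ha hb hc)
  · rw [min_eq_left h1, min_eq_right h2]
    exact le_trans (min_le_right _ _) (angle_triangle a b (-c) ha hb hnc)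
  · rw [min_eq_right h1, min_eq_left h2]
    have h3 : angle a (-c) ≤ angle a (-b) + angle (-b) (-c) :=
      angle_triangle a (-b) (-c) ha hnb hnc
    rw [angle_neg_neg] at h3
    exact le_trans (min_le_right _ _) h3
  · rw [min_eq_right h1, min_eq_right h2]
    have h3 : angle a c ≤ angle a (-b) + angle (-b) c :=
      angle_triangle a (-b) c ha hnb hc
    rw [angle_neg_left, ← angle_neg_right] at h3
    exact le_trans (min_le_left _ _) h3

private lemma key_sin (T : E ≃L[ℝ] E) (v w : E) (hv : v ≠ 0) (hw : w ≠ 0) :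
    Real.sin (angle (T v) (T w)) ≤
      ‖(T : E →L[ℝ] E)‖ * ‖(T.symm : E →L[ℝ] E)‖ * Real.sin (angle v w) := by
  set K1 := ‖(T : E →L[ℝ] E)‖
  set K2 := ‖(T.symm : E →L[ℝ] E)‖
  have hTv : T v ≠ 0 := by simp [hv]
  have hTw : T w ≠ 0 := by simp [hw]
  have hTvp : (0:ℝ) < ‖T v‖ := norm_pos_iff.mpr hTv
  have hTwp : (0:ℝ) < ‖T w‖ := norm_pos_iff.mpr hTw
  have hvp : (0:ℝ) < ‖v‖ := norm_pos_iff.mpr hv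
  set c : ℝ := ⟪v,w⟫ / ‖v‖^2
  have h1 : Real.sin (angle (T v) (T w)) * (‖T v‖ * ‖T w‖) ≤ ‖T v‖ * ‖T w - c • T v‖ :=
    sin_angle_le' (T v) (T w) c
  have h2 : T w - c • T v = T (w - c • v) := by
    rw [map_sub, map_smul]
  have h3 : ‖T (w - c • v)‖ ≤ K1 * ‖w - c • v‖ := by
    simpa using (T : E →L[ℝ] E).le_opNorm (w - c • v)
  have h4 : ‖v‖ * ‖w - c • v‖ = Real.sin (angle v w) * (‖v‖ * ‖w‖) := sin_angle_eq v w hv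
  have h5 : ‖w - c • v‖ = Real.sin (angle v w) * ‖w‖ := by
    have h4' : ‖v‖ * ‖w - c • v‖ = ‖v‖ * (Real.sin (angle v w) * ‖w‖) := by
      rw [h4]; ring
    exact mul_left_cancel₀ (ne_of_gt hvp) h4'
  have h6 : ‖w‖ ≤ K2 * ‖T w‖ := by
    have := (T.symm : E →L[ℝ] E).le_opNorm (T w)
    simpa using this
  have hsin : 0 ≤ Real.sin (angle v w) :=
    Real.sin_nonneg_of_nonneg_of_le_pi (angle_nonneg v w) (angle_le_pi v w)
  have hK1 : 0 ≤ K1 := norm_nonneg _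
  have hchain : Real.sin (angle (T v) (T w)) * (‖T v‖ * ‖T w‖) ≤
      K1 * K2 * Real.sin (angle v w) * (‖T v‖ * ‖T w‖) := by
    calc Real.sin (angle (T v) (T w)) * (‖T v‖ * ‖T w‖) ≤ ‖T v‖ * ‖T w - c • T v‖ := h1
      _ = ‖T v‖ * ‖T (w - c • v)‖ := by rw [h2]
      _ ≤ ‖T v‖ * (K1 * ‖w - c • v‖) := mul_le_mul_of_nonneg_left h3 (le_of_lt hTvp)
      _ = ‖T v‖ * (K1 * (Real.sin (angle v w) * ‖w‖)) := by rw [h5]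
      _ ≤ ‖T v‖ * (K1 * (Real.sin (angle v w) * (K2 * ‖T w‖))) := by
          have : Real.sin (angle v w) * ‖w‖ ≤ Real.sin (angle v w) * (K2 * ‖T w‖) :=
            mul_le_mul_of_nonneg_left h6 hsin
          exact mul_le_mul_of_nonneg_left (mul_le_mul_of_nonneg_left this hK1) (le_of_lt hTvp)
      _ = K1 * K2 * Real.sin (angle v w) * (‖T v‖ * ‖T w‖) := by ring
  exact le_of_mul_le_mul_right hchain (mul_pos hTvp hTwp)

private lemma midpoint_facts (v w : E) (hv : ‖v‖ = 1) (hw : ‖w‖ = 1) (hi : 0 ≤ ⟪v,w⟫) :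
    v + w ≠ 0 ∧ ‖‖v+w‖⁻¹ • (v+w)‖ = 1 ∧
    0 ≤ ⟪v, ‖v+w‖⁻¹ • (v+w)⟫ ∧ 0 ≤ ⟪‖v+w‖⁻¹ • (v+w), w⟫ ∧
    angle v (‖v+w‖⁻¹ • (v+w)) = angle v w / 2 ∧
    angle (‖v+w‖⁻¹ • (v+w)) w = angle v w / 2 := by
  set t : ℝ := ⟪v,w⟫ with ht
  have hnsq : ‖v + w‖^2 = 2 + 2*t := by
    rw [← real_inner_self_eq_norm_sq]
    rw [real_inner_add_add_self, real_inner_self_eq_norm_sq, real_inner_self_eq_norm_sq, hv, hw]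
    ring
  have h2 : (0:ℝ) < ‖v + w‖^2 := by rw [hnsq]; linarith
  have hn0 : ‖v + w‖ ≠ 0 := by
    intro h; rw [h] at h2; simp at h2
  have hnpos : (0:ℝ) < ‖v + w‖ := lt_of_le_of_ne (norm_nonneg _) (Ne.symm hn0)
  have hne : v + w ≠ 0 := by
    intro h; rw [h] at hn0; simp at hn0
  have hinv : (0:ℝ) < ‖v + w‖⁻¹ := inv_pos.mpr hnpos
  have hm1 : ‖‖v+w‖⁻¹ • (v+w)‖ = 1 := norm_smul_inv_norm hne
  have hiv : ⟪v, v + w⟫ = 1 + t := by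
    rw [inner_add_right, real_inner_self_eq_norm_sq, hv]; norm_num; exact ht.symm
  have hiw : ⟪v + w, w⟫ = 1 + t := by
    rw [inner_add_left, real_inner_self_eq_norm_sq, hw]; ring
  set θ := angle v w with hθ
  have hθ0 : 0 ≤ θ := angle_nonneg v w
  have hθπ : θ ≤ π := angle_le_pi v w
  have hcosθ : Real.cos θ = t := by rw [hθ, cos_angle, hv, hw]; norm_num; exact ht.symm
  have hsqrt : ‖v + w‖ = √(2 + 2*t) := by
    rw [← hnsq]; exact (Real.sqrt_sq (norm_nonneg _)).symm
  have hhalf : Real.cos (θ/2) = (1+t)/‖v+w‖ := by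
    rw [Real.cos_half (by linarith [Real.pi_pos] : -π ≤ θ) hθπ, hcosθ]
    rw [eq_div_iff hn0, hsqrt]
    rw [← Real.sqrt_mul (by linarith : (0:ℝ) ≤ (1+t)/2)]
    rw [show (1+t)/2 * (2+2*t) = (1+t)^2 by ring]
    exact Real.sqrt_sq (by linarith)
  have hhalfmem : 0 ≤ θ/2 ∧ θ/2 ≤ π := ⟨by linarith, by linarith [Real.pi_pos]⟩
  have hang1 : angle v (‖v+w‖⁻¹ • (v+w)) = θ/2 := by
    rw [angle_smul_right_of_pos _ _ hinv]
    have hc : Real.cos (angle v (v+w)) = Real.cos (θ/2) := by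
      rw [cos_angle, hv, hiv, hhalf]; ring_nf
    calc angle v (v+w) = Real.arccos (Real.cos (angle v (v+w))) :=
          (Real.arccos_cos (angle_nonneg _ _) (angle_le_pi _ _)).symm
      _ = Real.arccos (Real.cos (θ/2)) := by rw [hc]
      _ = θ/2 := Real.arccos_cos hhalfmem.1 hhalfmem.2
  have hang2 : angle (‖v+w‖⁻¹ • (v+w)) w = θ/2 := by
    rw [angle_smul_left_of_pos _ _ hinv]
    have hc : Real.cos (angle (v+w) w) = Real.cos (θ/2) := by
      rw [cos_angle, hw, hiw, hhalf]; ring_nf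
    calc angle (v+w) w = Real.arccos (Real.cos (angle (v+w) w)) :=
          (Real.arccos_cos (angle_nonneg _ _) (angle_le_pi _ _)).symm
      _ = Real.arccos (Real.cos (θ/2)) := by rw [hc]
      _ = θ/2 := Real.arccos_cos hhalfmem.1 hhalfmem.2
  refine ⟨hne, hm1, ?_, ?_, hang1, hang2⟩
  · rw [real_inner_smul_right, hiv]
    positivity
  · rw [real_inner_smul_left, hiw]
    positivity

private lemma iter_bound (T : E ≃L[ℝ] E) (n : ℕ) :
    ∀ v w : E, ‖v‖ = 1 → ‖w‖ = 1 → 0 ≤ ⟪v,w⟫ →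
      min (angle (T v) (T w)) (angle (T v) (-(T w))) ≤
        2^n * Real.arcsin (‖(T : E →L[ℝ] E)‖ * ‖(T.symm : E →L[ℝ] E)‖ *
          Real.sin (angle v w / 2^n)) := by
  set K := ‖(T : E →L[ℝ] E)‖ * ‖(T.symm : E →L[ℝ] E)‖ with hK
  induction n with
  | zero =>
    intro v w hv hw _
    simp only [pow_zero, one_mul, div_one]
    have hvne : v ≠ 0 := by intro h; rw [h] at hv; simp at hv
    have hwne : w ≠ 0 := by intro h; rw [h] at hw; simp at hw
    have hTv : T v ≠ 0 := by simp [hvne]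
    have hTw : T w ≠ 0 := by simp [hwne]
    set x := angle (T v) (T w) with hx
    have hneg : angle (T v) (-(T w)) = π - x := angle_neg_right (T v) (T w)
    set p := min x (angle (T v) (-(T w))) with hp
    have hp0 : 0 ≤ p := le_min (angle_nonneg _ _) (angle_nonneg _ _)
    have hple : p ≤ π/2 := by
      rcases le_total x (π/2) with h | h
      · exact le_trans (min_le_left _ _) h
      · refine le_trans (min_le_right _ _) ?_
        rw [hneg]
        have := angle_le_pi (T v) (T w)
        linarith
    have hsinp : Real.sin p = Real.sin x := by
      rcases min_cases x (angle (T v) (-(T w))) with ⟨h, _⟩ | ⟨h, _⟩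
      · rw [hp, h]
      · rw [hp, h, hneg, Real.sin_pi_sub]
    have hkey : Real.sin p ≤ K * Real.sin (angle v w) := by
      rw [hsinp, hx]; exact key_sin T v w hvne hwne
    calc p = Real.arcsin (Real.sin p) :=
          (Real.arcsin_sin (by linarith [Real.pi_pos]) hple).symm
      _ ≤ Real.arcsin (K * Real.sin (angle v w)) := Real.monotone_arcsin hkey
  | succ n ih =>
    intro v w hv hw hi
    obtain ⟨hne, hm1, him1, him2, hang1, hang2⟩ := midpoint_facts v w hv hw hi
    set m : E := ‖v+w‖⁻¹ • (v+w) with hm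
    have hvne : v ≠ 0 := by intro h; rw [h] at hv; simp at hv
    have hwne : w ≠ 0 := by intro h; rw [h] at hw; simp at hw
    have hmne : m ≠ 0 := by intro h; rw [h] at hm1; simp at hm1
    have hTv : T v ≠ 0 := by simp [hvne]
    have hTw : T w ≠ 0 := by simp [hwne]
    have hTm : T m ≠ 0 := by simp [hmne]
    have h1 := pd_triangle (T v) (T m) (T w) hTv hTm hTw
    have h2 := ih v m hv hm1 him1
    have h3 := ih m w hm1 hw him2
    rw [hang1] at h2
    rw [hang2] at h3
    have hdiv : angle v w / 2 / 2^n = angle v w / 2^(n+1) := by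
      rw [div_div, ← pow_succ']
    rw [hdiv] at h2 h3
    calc min (angle (T v) (T w)) (angle (T v) (-(T w)))
        ≤ min (angle (T v) (T m)) (angle (T v) (-(T m))) +
          min (angle (T m) (T w)) (angle (T m) (-(T w))) := h1
      _ ≤ 2^n * Real.arcsin (K * Real.sin (angle v w / 2^(n+1))) +
          2^n * Real.arcsin (K * Real.sin (angle v w / 2^(n+1))) := add_le_add h2 h3
      _ = 2^(n+1) * Real.arcsin (K * Real.sin (angle v w / 2^(n+1))) := by
          rw [pow_succ']; ring

private lemma limit_bound {K θ p : ℝ} (hK : 0 ≤ K) (hθ : 0 ≤ θ)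
    (hp : ∀ n : ℕ, p ≤ 2^n * Real.arcsin (K * Real.sin (θ / 2^n))) : p ≤ K * θ := by
  rcases eq_or_lt_of_le hθ with hθ0 | hθ0
  · have := hp 0
    simp only [pow_zero, one_mul, div_one, ← hθ0, Real.sin_zero, mul_zero,
      Real.arcsin_zero] at this
    simpa [← hθ0] using this
  set b : ℕ → ℝ := fun n => K * θ / 2^n with hb
  have hbt : Tendsto b atTop (𝓝 0) := by
    have h1 : Tendsto (fun n : ℕ => (K*θ) * (2⁻¹:ℝ)^n) atTop (𝓝 ((K*θ) * 0)) :=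
      (tendsto_pow_atTop_nhds_zero_of_lt_one (by norm_num) (by norm_num)).const_mul (K*θ)
    rw [mul_zero] at h1
    convert h1 using 2 with n
    rw [hb]
    simp [div_eq_mul_inv, inv_pow]
  have hev : ∀ᶠ n in atTop, b n < 1 := hbt.eventually_lt_const (by norm_num)
  have bound : ∀ n : ℕ, b n < 1 → p ≤ K * θ / √(1 - (b n)^2) := by
    intro n hn
    set x : ℝ := θ / 2^n with hx
    have hx0 : 0 ≤ x := by positivity
    have hKx : K * x = b n := by rw [hx, hb]; ring
    have hKx0 : 0 ≤ K * x := mul_nonneg hK hx0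
    have h1 : Real.arcsin (K * Real.sin x) ≤ Real.arcsin (K * x) :=
      Real.monotone_arcsin (mul_le_mul_of_nonneg_left (Real.sin_le hx0) hK)
    have h2 : Real.arcsin (K * x) ≤ Real.tan (Real.arcsin (K * x)) :=
      Real.le_tan (Real.arcsin_nonneg.mpr hKx0)
        (Real.arcsin_lt_pi_div_two.mpr (by rw [hKx]; exact hn))
    have h3 : Real.tan (Real.arcsin (K * x)) = (K * x) / √(1 - (K*x)^2) :=
      Real.tan_arcsin (K * x)
    have h4 : p ≤ 2^n * ((K * x) / √(1 - (K*x)^2)) := by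
      refine le_trans (hp n) ?_
      have := le_trans h1 (h2.trans_eq h3)
      exact mul_le_mul_of_nonneg_left this (by positivity)
    rw [hKx] at h4
    refine le_trans h4 (le_of_eq ?_)
    rw [hb]
    have h2n : (2:ℝ)^n ≠ 0 := by positivity
    field_simp
  have hlim : Tendsto (fun n => K * θ / √(1 - (b n)^2)) atTop (𝓝 (K * θ)) := by
    have hc : Continuous (fun y : ℝ => √(1 - y^2)) :=
      Real.continuous_sqrt.comp (by continuity)
    have hd : Tendsto (fun n => √(1 - (b n)^2)) atTop (𝓝 1) := by
      have := (hc.tendsto 0).comp hbt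
      simpa [Function.comp_def] using this
    have := Tendsto.div (tendsto_const_nhds (x := K * θ) (f := atTop)) hd one_ne_zero
    simpa [Pi.div_def] using this
  exact ge_of_tendsto hlim (hev.mono bound)

end Aux

theorem stmt_9 {E : Type*} [NormedAddCommGroup E] [InnerProductSpace ℝ E]
    (hdim : Module.finrank ℝ E = 2) (T : E ≃L[ℝ] E) :
    ∀ v w : E, v ≠ 0 → w ≠ 0 →
      min (InnerProductGeometry.angle (T v) (T w))
          (InnerProductGeometry.angle (T v) (-(T w))) ≤
        ‖(T : E →L[ℝ] E)‖ * ‖(T.symm : E →L[ℝ] E)‖ *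
          min (InnerProductGeometry.angle v w) (InnerProductGeometry.angle v (-w)) := by
  intro v w hv hw
  set K := ‖(T : E →L[ℝ] E)‖ * ‖(T.symm : E →L[ℝ] E)‖ with hK
  have hK0 : 0 ≤ K := mul_nonneg (norm_nonneg _) (norm_nonneg _)
  have main : ∀ a b : E, ‖a‖ = 1 → ‖b‖ = 1 → 0 ≤ ⟪a,b⟫ →
      min (angle (T a) (T b)) (angle (T a) (-(T b))) ≤
        K * min (angle a b) (angle a (-b)) := by
    intro a b ha hb hi
    have hminr : min (angle a b) (angle a (-b)) = angle a b := by
      apply min_eq_left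
      rw [angle_neg_right]
      have hle : angle a b ≤ π/2 := by
        rw [← Real.arccos_cos (angle_nonneg a b) (angle_le_pi a b)]
        apply Real.arccos_le_pi_div_two.mpr
        rw [cos_angle, ha, hb]
        simpa using hi
      linarith
    rw [hminr]
    exact limit_bound hK0 (angle_nonneg a b) (fun n => iter_bound T n a b ha hb hi)
  set a : E := ‖v‖⁻¹ • v with haa
  set b : E := ‖w‖⁻¹ • w with hbb
  have pa : (0:ℝ) < ‖v‖⁻¹ := inv_pos.mpr (norm_pos_iff.mpr hv)
  have pb : (0:ℝ) < ‖w‖⁻¹ := inv_pos.mpr (norm_pos_iff.mpr hw)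
  have ha1 : ‖a‖ = 1 := norm_smul_inv_norm hv
  have hb1 : ‖b‖ = 1 := norm_smul_inv_norm hw
  have e1 : angle v w = angle a b := by
    rw [haa, hbb, angle_smul_left_of_pos _ _ pa, angle_smul_right_of_pos _ _ pb]
  have e2 : angle v (-w) = angle a (-b) := by
    rw [haa, hbb, ← smul_neg, angle_smul_left_of_pos _ _ pa, angle_smul_right_of_pos _ _ pb]
  have eTa : T a = ‖v‖⁻¹ • T v := by rw [haa, map_smul]
  have eTb : T b = ‖w‖⁻¹ • T w := by rw [hbb, map_smul]
  have e3 : angle (T v) (T w) = angle (T a) (T b) := by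
    rw [eTa, eTb, angle_smul_left_of_pos _ _ pa, angle_smul_right_of_pos _ _ pb]
  have e4 : angle (T v) (-(T w)) = angle (T a) (-(T b)) := by
    rw [eTa, eTb, ← smul_neg, angle_smul_left_of_pos _ _ pa, angle_smul_right_of_pos _ _ pb]
  rw [e1, e2, e3, e4]
  rcases le_or_gt 0 ⟪a,b⟫ with hi | hi
  · exact main a b ha1 hb1 hi
  · have hi' : 0 ≤ ⟪a, -b⟫ := by rw [inner_neg_right]; linarith
    have h := main a (-b) ha1 (by rw [norm_neg]; exact hb1) hi'
    rw [map_neg, neg_neg, neg_neg] at h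
    rw [min_comm (angle (T a) (T b)) _, min_comm (angle a b) _]
    exact h
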